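/- Let W be a subset of c_00(ℕ) and suppose every g ∈ W with w(g) ≥ m (weight at least m) satisfies |g(x)| ≤ 1/w(g) for x = (1/M)Σ_{l=1}^M e_l. Suppose g = (1/w)Σ_{k=1}^d g_k with d ≤ 4n, each g_k ∈ W, and #{l : |g_k(e_l)| > 1/m} ≤ B for each k. If M ≥ 4n · B · m, then |g(x)| ≤ 2/(w·m). -/

import Mathlib

/-- The action `f(x) = Σ_a f(e_a) x(e_a)` of a functional on a vector. -/
def pair (f x : ℕ →₀ ℝ) : ℝ := ∑ a ∈ f.support, f a * x a

/-- splitting argument of Lemma 4.4(ii): let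
`x = (1/M) Σ_{l=1}^M e_l` and let `W` be a set of norming functionals (so
members have coordinates of absolute value at most `1`), with weight function
`wt`, such that every `g' ∈ W` with `wt g' ≥ m` satisfies `|g'(x)| ≤ 1/wt g'`.
Suppose `g = (1/w) Σ_{k=1}^d g_k` with `d ≤ 4n`, the `g_k ∈ W` disjointly
supported, and `#{l : |g_k(e_l)| > 1/m} ≤ B` for each `k`.  If
`M ≥ 4 n B m`, then `|g(x)| ≤ 2/(w m)`. -/
theorem stmt16 (W : Set (ℕ →₀ ℝ)) (wt : (ℕ →₀ ℝ) → ℕ)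
    (hcoord : ∀ g' ∈ W, ∀ l, |g' l| ≤ 1)
    (m M nn B w d : ℕ) (hm : 1 ≤ m) (hw : 1 ≤ w) (hM : 1 ≤ M)
    (x : ℕ →₀ ℝ)
    (hx : x = ((M : ℝ))⁻¹ • ∑ l ∈ Finset.Icc 1 M, Finsupp.single l (1 : ℝ))
    (hW : ∀ g' ∈ W, m ≤ wt g' → |pair g' x| ≤ 1 / (wt g' : ℝ))
    (gk : Fin d → (ℕ →₀ ℝ)) (hgk : ∀ k, gk k ∈ W) (hd : d ≤ 4 * nn)
    (hdisj : ∀ k k' : Fin d, k ≠ k' → Disjoint (gk k).support (gk k').support)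
    (hB : ∀ k, ((gk k).support.filter (fun l => 1 / (m : ℝ) < |(gk k) l|)).card ≤ B)
    (g : ℕ →₀ ℝ) (hg : g = ((w : ℝ))⁻¹ • ∑ k, gk k)
    (hMbig : 4 * nn * B * m ≤ M) :
    |pair g x| ≤ 2 / ((w : ℝ) * m) := by
  have hm' : (0:ℝ) < m := by exact_mod_cast hm
  have hw' : (0:ℝ) < w := by exact_mod_cast hw
  have hM' : (0:ℝ) < M := by exact_mod_cast hM
  set t : ℕ → ℝ := fun l => ∑ k, gk k l with ht
  -- disjointness: at most one nonzero term
  have hone : ∀ (l : ℕ) (c : ℝ), 0 ≤ c → (∀ k, |gk k l| ≤ c) → |t l| ≤ c := by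
    intro l c hc hck
    by_cases hz : ∀ k, gk k l = 0
    · simp only [ht]
      rw [Finset.sum_eq_zero (fun k _ => hz k)]
      simpa using hc
    · push_neg at hz
      obtain ⟨k0, hk0⟩ := hz
      have heq : t l = gk k0 l := by
        apply Finset.sum_eq_single k0
        · intro k _ hk
          by_contra hne
          have hl0 : l ∈ (gk k0).support := Finsupp.mem_support_iff.mpr hk0
          have hl : l ∈ (gk k).support := Finsupp.mem_support_iff.mpr hne
          exact (Finset.disjoint_left.mp (hdisj k k0 hk) hl) hl0
        · intro h; exact absurd (Finset.mem_univ k0) h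
      rw [heq]; exact hck k0
  -- x coordinates
  have hxa : ∀ a, x a = if a ∈ Finset.Icc 1 M then (M:ℝ)⁻¹ else 0 := by
    intro a
    subst hx
    rw [Finsupp.smul_apply, Finsupp.finset_sum_apply]
    simp only [Finsupp.single_apply]
    rw [Finset.sum_ite_eq' (Finset.Icc 1 M) a (fun _ => (1:ℝ))]
    split <;> simp
  -- g coordinates
  have hga : ∀ a, g a = (w:ℝ)⁻¹ * t a := by
    intro a
    subst hg
    rw [Finsupp.smul_apply, Finsupp.finset_sum_apply]
    simp [ht]
  -- rewrite pair
  have hpair : pair g x = ∑ a ∈ Finset.Icc 1 M, g a * (M:ℝ)⁻¹ := by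
    unfold pair
    rw [Finset.sum_subset (Finset.subset_union_left (s₁ := g.support) (s₂ := Finset.Icc 1 M))
      (fun a _ ha => by rw [Finsupp.notMem_support_iff.mp ha, zero_mul])]
    rw [← Finset.sum_subset (Finset.subset_union_right (s₁ := g.support) (s₂ := Finset.Icc 1 M))
      (fun a _ ha => by rw [hxa a, if_neg ha, mul_zero])]
    apply Finset.sum_congr rfl
    intro a ha
    rw [hxa a, if_pos ha]
  -- the bad set D
  set D : Finset ℕ := Finset.univ.biUnion
    (fun k => (gk k).support.filter (fun l => 1 / (m : ℝ) < |(gk k) l|)) with hD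
  have hDcard : (D.card : ℝ) ≤ 4 * nn * B := by
    have h1 : D.card ≤ ∑ k : Fin d, ((gk k).support.filter (fun l => 1 / (m : ℝ) < |(gk k) l|)).card :=
      Finset.card_biUnion_le
    have h2 : ∑ k : Fin d, ((gk k).support.filter (fun l => 1 / (m : ℝ) < |(gk k) l|)).card
        ≤ d * B := by
      calc _ ≤ ∑ _k : Fin d, B := Finset.sum_le_sum (fun k _ => hB k)
        _ = d * B := by simp [Finset.sum_const, mul_comm]
    have : D.card ≤ 4 * nn * B := le_trans (le_trans h1 h2) (Nat.mul_le_mul_right B hd)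
    exact_mod_cast this
  -- pointwise bounds
  have hbound1 : ∀ a, |t a| ≤ 1 := by
    intro a
    exact hone a 1 zero_le_one (fun k => hcoord (gk k) (hgk k) a)
  have hbound2 : ∀ a, a ∉ D → |t a| ≤ 1 / m := by
    intro a haD
    apply hone a (1/m) (by positivity)
    intro k
    by_cases hs : a ∈ (gk k).support
    · by_contra hlt
      push_neg at hlt
      exact haD (Finset.mem_biUnion.mpr ⟨k, Finset.mem_univ k,
        Finset.mem_filter.mpr ⟨hs, hlt⟩⟩)
    · rw [Finsupp.notMem_support_iff.mp hs]
      simp only [abs_zero]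
      positivity
  -- sum bound
  have hsum : ∑ a ∈ Finset.Icc 1 M, |t a| ≤ (4*nn*B : ℝ) + M * (1/m) := by
    rw [← Finset.sum_filter_add_sum_filter_not (Finset.Icc 1 M) (· ∈ D)]
    have hA : ∑ a ∈ (Finset.Icc 1 M).filter (· ∈ D), |t a| ≤ (4*nn*B : ℝ) := by
      calc ∑ a ∈ (Finset.Icc 1 M).filter (· ∈ D), |t a|
          ≤ ∑ _a ∈ (Finset.Icc 1 M).filter (· ∈ D), (1:ℝ) :=
            Finset.sum_le_sum (fun a _ => hbound1 a)
        _ = ((Finset.Icc 1 M).filter (· ∈ D)).card := by simp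
        _ ≤ (D.card : ℝ) := by
            exact_mod_cast Finset.card_le_card (fun a ha => (Finset.mem_filter.mp ha).2)
        _ ≤ 4*nn*B := hDcard
    have hC : ∑ a ∈ (Finset.Icc 1 M).filter (· ∉ D), |t a| ≤ (M:ℝ) * (1/m) := by
      calc ∑ a ∈ (Finset.Icc 1 M).filter (· ∉ D), |t a|
          ≤ ∑ _a ∈ (Finset.Icc 1 M).filter (· ∉ D), (1/m : ℝ) :=
            Finset.sum_le_sum (fun a ha => hbound2 a (Finset.mem_filter.mp ha).2)
        _ = ((Finset.Icc 1 M).filter (· ∉ D)).card * (1/m : ℝ) := by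
            rw [Finset.sum_const]; simp [nsmul_eq_mul]
        _ ≤ (M:ℝ) * (1/m) := by
            apply mul_le_mul_of_nonneg_right _ (by positivity)
            have : ((Finset.Icc 1 M).filter (· ∉ D)).card ≤ M := by
              calc _ ≤ (Finset.Icc 1 M).card := Finset.card_filter_le _ _
                _ = M := by rw [Nat.card_Icc]; omega
            exact_mod_cast this
    linarith
  -- put together
  have hfin : |pair g x| ≤ (w:ℝ)⁻¹ * (M:ℝ)⁻¹ * ((4*nn*B : ℝ) + M * (1/m)) := by
    rw [hpair]
    calc |∑ a ∈ Finset.Icc 1 M, g a * (M:ℝ)⁻¹|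
        ≤ ∑ a ∈ Finset.Icc 1 M, |g a * (M:ℝ)⁻¹| := Finset.abs_sum_le_sum_abs _ _
      _ = ∑ a ∈ Finset.Icc 1 M, (w:ℝ)⁻¹ * (M:ℝ)⁻¹ * |t a| := by
          apply Finset.sum_congr rfl
          intro a _
          rw [hga a, abs_mul, abs_mul, abs_inv, abs_inv, Nat.abs_cast, Nat.abs_cast]
          ring
      _ = (w:ℝ)⁻¹ * (M:ℝ)⁻¹ * ∑ a ∈ Finset.Icc 1 M, |t a| := by
          rw [← Finset.mul_sum]
      _ ≤ (w:ℝ)⁻¹ * (M:ℝ)⁻¹ * ((4*nn*B : ℝ) + M * (1/m)) := by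
          apply mul_le_mul_of_nonneg_left hsum (by positivity)
  have hkey : (4*nn*B : ℝ) ≤ M * (1/m) := by
    have h : ((4*nn*B*m : ℕ) : ℝ) ≤ (M:ℝ) := by exact_mod_cast hMbig
    push_cast at h
    rw [mul_one_div, le_div_iff₀ hm']
    linarith
  have : (w:ℝ)⁻¹ * (M:ℝ)⁻¹ * ((4*nn*B : ℝ) + M * (1/m)) ≤ 2 / ((w:ℝ) * m) := by
    have h2 : (w:ℝ)⁻¹ * (M:ℝ)⁻¹ * ((4*nn*B : ℝ) + M * (1/m))
        ≤ (w:ℝ)⁻¹ * (M:ℝ)⁻¹ * (M * (1/m) + M * (1/m)) := by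
      apply mul_le_mul_of_nonneg_left (by linarith) (by positivity)
    have h3 : (w:ℝ)⁻¹ * (M:ℝ)⁻¹ * ((M:ℝ) * (1/m) + M * (1/m)) = 2 / ((w:ℝ) * m) := by
      field_simp
      ring
    linarith
  linarith
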